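/- With M = W ⊕ L as above over a field Φ of prime characteristic p, the algebra M is not nilpotent: for every natural number m, the left-normed product e_{f₀} x₁ x₂ ⋯ x_m is nonzero in M, where f₀ is the zero function. Hence no identity z₁z₂⋯z_{c+1} = 0 holds in M for any c. -/

import Mathlib

/-- The free `Φ`-vector space on the set `Φ^ℕ` of functions `ℕ → Φ`. -/
abbrev W (Φ : Type*) [Field Φ] : Type _ := (ℕ → Φ) →₀ Φ

/-- The shift on indexing functions: increments the value at `m` by `1`. -/
def shift (Φ : Type*) [Field Φ] (m : ℕ) : (ℕ → Φ) → (ℕ → Φ) :=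
  fun f => Function.update f m (f m + 1)

/-- The endomorphism `δ_m` of `W`. -/
noncomputable def delta (Φ : Type*) [Field Φ] (m : ℕ) : Module.End Φ (W Φ) :=
  Finsupp.lmapDomain Φ Φ (shift Φ m)

/-- The operator `x_m = δ_m - 1`. -/
noncomputable def xop (Φ : Type*) [Field Φ] (m : ℕ) : Module.End Φ (W Φ) :=
  delta Φ m - 1

/-- `L`: the abelian Lie algebra spanned by the commuting operators `x_i`. -/
noncomputable def Lsub (Φ : Type*) [Field Φ] : Submodule Φ (Module.End Φ (W Φ)) :=
  Submodule.span Φ (Set.range (xop Φ))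

/-- `M = W ⊕ L`. -/
abbrev M (Φ : Type*) [Field Φ] : Type _ := W Φ × Lsub Φ

/-- Multiplication on `M`: `(w₁ + l₁)(w₂ + l₂) = w₁ · l₂`. -/
noncomputable def mulM (Φ : Type*) [Field Φ] : M Φ → M Φ → M Φ :=
  fun a b => ((b.2 : Module.End Φ (W Φ)) a.1, 0)

/-- The element `x_i` of `M` (sitting in the `L` component). -/
noncomputable def xel (Φ : Type*) [Field Φ] (i : ℕ) : M Φ :=
  (0, ⟨xop Φ i, Submodule.subset_span ⟨i, rfl⟩⟩)

/-- The element `e_{f₀}` of `M`, `f₀` being the zero function. -/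
noncomputable def e0 (Φ : Type*) [Field Φ] : M Φ :=
  (Finsupp.single (fun _ => (0 : Φ)) (1 : Φ), 0)

section Aux
variable (Φ : Type*) [Field Φ]

lemma shift_injective (m : ℕ) : Function.Injective (shift Φ m) := by
  intro f g h
  funext k
  by_cases hk : k = m
  · subst hk
    have := congrFun h k
    simp only [shift, Function.update_self] at this
    exact add_right_cancel this
  · have := congrFun h k
    simpa [shift, Function.update_of_ne hk] using this

/-- The indicator function of `{1, …, m}`. -/
def gfun (m : ℕ) : ℕ → Φ := fun k => if 1 ≤ k ∧ k ≤ m then 1 else 0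

lemma shift_gfun (m : ℕ) : shift Φ (m + 1) (gfun Φ m) = gfun Φ (m + 1) := by
  funext k
  by_cases hk : k = m + 1
  · subst hk
    have h1 : ¬ (1 ≤ m + 1 ∧ m + 1 ≤ m) := by omega
    have h2 : (1 ≤ m + 1 ∧ m + 1 ≤ m + 1) := by omega
    simp [shift, gfun, h1, h2]
  · have : (1 ≤ k ∧ k ≤ m) ↔ (1 ≤ k ∧ k ≤ m + 1) := by omega
    simp [shift, Function.update_of_ne hk, gfun, this]

lemma key (m : ℕ) :
    (((List.range' 1 m).foldl (fun a j => mulM Φ a (xel Φ j)) (e0 Φ)).1) (gfun Φ m) = 1 ∧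
    ∀ f ∈ (((List.range' 1 m).foldl (fun a j => mulM Φ a (xel Φ j)) (e0 Φ)).1).support,
      ∀ k, m < k → f k = 0 := by
  classical
  induction m with
  | zero =>
    have hg : gfun Φ 0 = fun _ => (0 : Φ) := by
      funext k
      simp only [gfun]
      have : ¬ (1 ≤ k ∧ k ≤ 0) := by omega
      rw [if_neg this]
    constructor
    · simp [e0, hg]
    · intro f hf k _
      have h1 : (1 : Φ) ≠ 0 := one_ne_zero
      simp only [e0, List.range'] at hf
      rw [List.foldl_nil] at hf
      simp only [Finsupp.support_single_ne_zero _ h1, Finset.mem_singleton] at hf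
      subst hf
      rfl
  | succ m ih =>
    have hconcat : List.range' 1 (m + 1) = List.range' 1 m ++ [1 + m] := by
      simpa using List.range'_concat (step := 1) (s := 1) (n := m)
    set v : W Φ := ((List.range' 1 m).foldl (fun a j => mulM Φ a (xel Φ j)) (e0 Φ)).1 with hv
    have hstep :
        ((List.range' 1 (m + 1)).foldl (fun a j => mulM Φ a (xel Φ j)) (e0 Φ)).1
          = Finsupp.mapDomain (shift Φ (m + 1)) v - v := by
      rw [hconcat, List.foldl_append, List.foldl_cons, List.foldl_nil]
      have h1m : 1 + m = m + 1 := by omega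
      simp only [mulM, xel, h1m]
      show (xop Φ (m + 1)) v = _
      simp [xop, delta, Finsupp.lmapDomain_apply, LinearMap.sub_apply]
    rw [hstep]
    constructor
    · rw [Finsupp.sub_apply]
      have h1 : Finsupp.mapDomain (shift Φ (m + 1)) v (gfun Φ (m + 1)) = v (gfun Φ m) := by
        rw [← shift_gfun]
        exact Finsupp.mapDomain_apply (shift_injective Φ (m + 1)) v _
      have h2 : v (gfun Φ (m + 1)) = 0 := by
        by_contra h
        have hmem : gfun Φ (m + 1) ∈ v.support := Finsupp.mem_support_iff.2 h
        have := ih.2 _ hmem (m + 1) (by omega)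
        have h2 : (1 ≤ m + 1 ∧ m + 1 ≤ m + 1) := by omega
        simp [gfun, h2] at this
      rw [h1, h2, ih.1, sub_zero]
    · intro f hf k hk
      have hsub := Finsupp.support_sub hf
      rcases Finset.mem_union.1 hsub with h | h
      · have := Finsupp.mapDomain_support h
        rcases Finset.mem_image.1 this with ⟨f', hf', rfl⟩
        have hne : k ≠ m + 1 := by omega
        have : f' k = 0 := ih.2 f' hf' k (by omega)
        simpa [shift, Function.update_of_ne hne] using this
      · exact ih.2 f h k (by omega)

lemma foldl_z (l : List ℕ) (h : ∀ j ∈ l, j ≠ 0) (a : M Φ) :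
    l.foldl (fun a j => mulM Φ a (if j = 0 then e0 Φ else xel Φ j)) a
      = l.foldl (fun a j => mulM Φ a (xel Φ j)) a := by
  induction l generalizing a with
  | nil => rfl
  | cons j l ihl =>
    have hj : j ≠ 0 := h j (List.mem_cons_self (a := j) (l := l))
    simp only [List.foldl_cons, if_neg hj]
    exact ihl (fun j hj => h j (List.mem_cons_of_mem _ hj)) _

end Aux

/-- `M` is not nilpotent: every left-normed product
`e_{f₀} x₁ x₂ ⋯ x_m` is nonzero; hence no identity `z₁z₂⋯z_{c+1} = 0` holds
in `M` for any `c`. -/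
theorem M_not_nilpotent (Φ : Type*) [Field Φ] (p : ℕ) [Fact p.Prime] [CharP Φ p] :
    (∀ m : ℕ,
      (List.range' 1 m).foldl (fun a j => mulM Φ a (xel Φ j)) (e0 Φ) ≠ 0) ∧
    ∀ c : ℕ, ∃ z : ℕ → M Φ,
      (List.range' 1 c).foldl (fun a j => mulM Φ a (z j)) (z 0) ≠ 0 := by
  have hmain : ∀ m : ℕ,
      (List.range' 1 m).foldl (fun a j => mulM Φ a (xel Φ j)) (e0 Φ) ≠ 0 := by
    intro m h
    have hk := (key Φ m).1
    rw [h] at hk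
    simp at hk
  refine ⟨hmain, fun c => ⟨fun j => if j = 0 then e0 Φ else xel Φ j, ?_⟩⟩
  have hz : ∀ j ∈ List.range' 1 c, j ≠ 0 := by
    intro j hj
    have := (List.mem_range'_1.1 hj).1
    omega
  simp only [if_pos rfl]
  rw [foldl_z Φ _ hz]
  exact hmain c
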